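/- Let A, B, C, C' ∈ ℂ^{r×r} with C + nI and C' + nI invertible for all integers n ≥ 0, AB = BA, CC' = C'C, and √|x| + √|y| < 1. (i) If A + kI is invertible for all integers k ≥ 0, then for every non-negative integer s: F₄(A+sI, B; C, C'; x, y) = ∑_{k₁+k₂ ≤ s} (s!/(k₁! k₂! (s−k₁−k₂)!)) (B)_{k₁+k₂} x^{k₁} y^{k₂} ·[F₄(A+(k₁+k₂)I, B+(k₁+k₂)I; C+k₁I, C'+k₂I; x, y)]·(C)_{k₁}⁻¹·(C')_{k₂}⁻¹. (ii) If moreover A − kI is invertible for all integers 1 ≤ k ≤ s, then F₄(A−sI, B; C, C'; x, y) = ∑_{k₁+k₂ ≤ s} (s!/(k₁! k₂! (s−k₁−k₂)!)) (B)_{k₁+k₂} (−x)^{k₁} (−y)^{k₂} ·[F₄(A, B+(k₁+k₂)I; C+k₁I, C'+k₂I; x, y)]·(C)_{k₁}⁻¹·(C')_{k₂}⁻¹. -/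

import Mathlib

/-- The shifted factorial (Pochhammer) matrix: `(A)_0 = I`, `(A)_{n+1} = (A)_n (A + nI)`. -/
noncomputable def mPoch {r : ℕ} (A : Matrix (Fin r) (Fin r) ℂ) : ℕ → Matrix (Fin r) (Fin r) ℂ
  | 0 => 1
  | n + 1 => mPoch A n * (A + (n : ℂ) • 1)

/-- The fourth Appell matrix function `F₄(A, B; C, C'; x, y)`. -/
noncomputable def appellF4 {r : ℕ} (A B C C' : Matrix (Fin r) (Fin r) ℂ) (x y : ℂ) :
    Matrix (Fin r) (Fin r) ℂ :=
  ∑' p : ℕ × ℕ,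
    (((p.1.factorial : ℂ) * (p.2.factorial : ℂ))⁻¹ * x ^ p.1 * y ^ p.2) •
      (mPoch A (p.1 + p.2) * mPoch B (p.1 + p.2) * (mPoch C p.1)⁻¹ * (mPoch C' p.2)⁻¹)

namespace AF4
open Finset
open scoped NNReal
variable {r : ℕ}

local notation "Mx" => Matrix (Fin r) (Fin r) ℂ

/-- shift of a matrix by `k` times identity -/
noncomputable def sh (A : Mx) (k : ℕ) : Mx := A + (k : ℂ) • 1

@[simp] lemma sh_zero (A : Mx) : sh A 0 = A := by simp [sh]

lemma sh_add (A : Mx) (k m : ℕ) : sh A (k + m) = sh A k + (m : ℂ) • 1 := by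
  unfold sh; push_cast; rw [add_smul]; abel

lemma sh_succ_one (A : Mx) (k : ℕ) : sh A (k + 1) = sh A k + 1 := by
  rw [sh_add]; norm_num

@[simp] lemma mPoch_zero (A : Mx) : mPoch A 0 = 1 := rfl

lemma mPoch_succ (A : Mx) (n : ℕ) : mPoch A (n + 1) = mPoch A n * sh A n := rfl

lemma commute_sh {X Y : Mx} (h : Commute X Y) (k : ℕ) : Commute X (sh Y k) :=
  h.add_right (Commute.smul_right (Commute.one_right X) _)

lemma commute_mPoch_right {X Y : Mx} (h : Commute X Y) (n : ℕ) : Commute X (mPoch Y n) := by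
  induction n with
  | zero => exact Commute.one_right X
  | succ n ih => exact (mPoch_succ Y n) ▸ ih.mul_right (commute_sh h n)

lemma commute_mPoch {X Y : Mx} (h : Commute X Y) (a b : ℕ) :
    Commute (mPoch X a) (mPoch Y b) :=
  commute_mPoch_right ((commute_mPoch_right h.symm a).symm) b

lemma mPoch_add (A : Mx) (k m : ℕ) : mPoch A (k + m) = mPoch A k * mPoch (sh A k) m := by
  induction m with
  | zero => simp
  | succ m ih =>
    rw [← add_assoc, mPoch_succ, ih, mPoch_succ, mul_assoc]
    congr 2
    rw [sh_add]; rfl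

lemma mPoch_isUnit {C : Mx} (h : ∀ n : ℕ, IsUnit (sh C n)) (n : ℕ) : IsUnit (mPoch C n) := by
  induction n with
  | zero => exact isUnit_one
  | succ n ih => exact (mPoch_succ C n) ▸ ih.mul (h n)

lemma commute_inv_right {X Y : Mx} (h : Commute X Y) (hY : IsUnit Y) : Commute X Y⁻¹ := by
  have hd : IsUnit Y.det := (Matrix.isUnit_iff_isUnit_det Y).mp hY
  have h1 : Y * Y⁻¹ = 1 := Matrix.mul_nonsing_inv _ hd
  have h2 : Y⁻¹ * Y = 1 := Matrix.nonsing_inv_mul _ hd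
  show X * Y⁻¹ = Y⁻¹ * X
  calc X * Y⁻¹ = Y⁻¹ * Y * X * Y⁻¹ := by rw [h2, one_mul]
  _ = Y⁻¹ * (X * Y) * Y⁻¹ := by rw [h.eq]; noncomm_ring
  _ = Y⁻¹ * X * (Y * Y⁻¹) := by noncomm_ring
  _ = Y⁻¹ * X := by rw [h1, mul_one]

lemma mPoch_inv_add (C : Mx) (k m : ℕ) :
    (mPoch C (k + m))⁻¹ = (mPoch (sh C k) m)⁻¹ * (mPoch C k)⁻¹ := by
  rw [mPoch_add, Matrix.mul_inv_rev]

/-- contiguous relation, up -/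
lemma mPoch_shift_one (X : Mx) (n : ℕ) :
    mPoch (X + 1) n = mPoch X n + (n : ℂ) • mPoch (X + 1) (n - 1) := by
  cases n with
  | zero => simp
  | succ m =>
    have hX1 : sh (X + 1) m = sh X m + 1 := by unfold sh; abel
    have hcomm : mPoch (X + 1) m * X = X * mPoch (X + 1) m :=
      (commute_mPoch_right (((Commute.refl X).add_right (Commute.one_right X)) ) m).eq.symm
    have hleft : mPoch X (m + 1) = X * mPoch (X + 1) m := by
      have : mPoch X (1 + m) = mPoch X 1 * mPoch (sh X 1) m := mPoch_add X 1 m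
      rw [add_comm 1 m] at this
      rw [this]
      congr 1
      · show (1 : Mx) * sh X 0 = X; simp
      · unfold sh; norm_num
    rw [mPoch_succ, Nat.add_sub_cancel, hleft, hX1]
    unfold sh
    rw [mul_add, mul_add, mul_one, mul_smul_comm, mul_one, hcomm]
    push_cast
    rw [add_smul, one_smul]
    abel

/-- contiguous relation, down -/
lemma mPoch_shift_neg_one (X : Mx) (n : ℕ) :
    mPoch (X - 1) n = mPoch X n - (n : ℂ) • mPoch X (n - 1) := by
  cases n with
  | zero => simp
  | succ m =>
    have hleft : mPoch (X - 1) (m + 1) = (X - 1) * mPoch X m := by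
      have : mPoch (X-1) (1 + m) = mPoch (X-1) 1 * mPoch (sh (X-1) 1) m := mPoch_add (X-1) 1 m
      rw [add_comm 1 m] at this
      rw [this]
      congr 1
      · show (1 : Mx) * sh (X-1) 0 = X - 1; simp
      · unfold sh; norm_num
    have hcomm : mPoch X m * X = X * mPoch X m :=
      (commute_mPoch_right (Commute.refl X) m).eq.symm
    rw [hleft, Nat.add_sub_cancel, mPoch_succ]
    unfold sh
    rw [mul_add, mul_smul_comm, mul_one, hcomm, sub_mul, one_mul]
    push_cast
    rw [add_smul, one_smul]
    abel

lemma nat_coeff (P s k : ℕ) :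
    P.choose (k+1) * (s+1).descFactorial (k+1)
      = P.choose (k+1) * s.descFactorial (k+1) + P.choose k * s.descFactorial k * (P - k) := by
  rw [Nat.succ_descFactorial_succ, Nat.descFactorial_succ]
  rcases le_or_gt k s with h | h
  · have h1 : s + 1 = (s - k) + (k + 1) := by omega
    have h2 : P.choose (k+1) * (k+1) = P.choose k * (P - k) := Nat.choose_succ_right_eq P k
    calc P.choose (k+1) * ((s+1) * s.descFactorial k)
        = P.choose (k+1) * ((s-k) * s.descFactorial k)
          + P.choose (k+1) * (k+1) * s.descFactorial k := by rw [h1]; ring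
      _ = _ := by rw [h2]; ring
  · rw [Nat.descFactorial_of_lt h]; simp

/-- Key identity (up): `(A + s)_P = ∑_k C(P,k) s^{(k)↓} (A+k)_{P-k}` -/
lemma key_up : ∀ (s : ℕ) (A : Mx) (P : ℕ),
    mPoch (sh A s) P
      = ∑ k ∈ range (P+1), ((P.choose k * s.descFactorial k : ℕ) : ℂ) • mPoch (sh A k) (P - k) := by
  intro s
  induction s with
  | zero =>
    intro A P
    rw [Finset.sum_eq_single 0]
    · simp
    · intro k _ hk
      obtain ⟨m, rfl⟩ := Nat.exists_eq_succ_of_ne_zero hk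
      simp
    · simp
  | succ s ih =>
    intro A P
    have h0 : sh A (s+1) = sh (A + 1) s := by
      unfold sh; push_cast; rw [add_smul, one_smul]; abel
    have hsh1 : ∀ k : ℕ, sh (A+1) k = sh A k + 1 := fun k => by unfold sh; abel
    have step : ∀ k, ((P.choose k * s.descFactorial k : ℕ) : ℂ) • mPoch (sh (A+1) k) (P-k)
        = ((P.choose k * s.descFactorial k : ℕ) : ℂ) • mPoch (sh A k) (P-k)
          + ((P.choose k * s.descFactorial k * (P - k) : ℕ) : ℂ) • mPoch (sh A (k+1)) (P-(k+1)) := by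
      intro k
      rw [hsh1 k, mPoch_shift_one, smul_add, smul_smul]
      have h1 : sh A k + 1 = sh A (k+1) := (sh_succ_one A k).symm
      have h2 : P - k - 1 = P - (k+1) := by omega
      rw [h1, h2]
      congr 1
      push_cast
      ring
    rw [h0, ih (A+1) P, Finset.sum_congr rfl fun k _ => step k, Finset.sum_add_distrib]
    have hlast : ((P.choose P * s.descFactorial P * (P - P) : ℕ) : ℂ) • mPoch (sh A (P+1)) (P-(P+1)) = 0 := by
      simp
    rw [Finset.sum_range_succ
      (f := fun k => ((P.choose k * s.descFactorial k * (P - k) : ℕ) : ℂ) • mPoch (sh A (k+1)) (P-(k+1))),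
      hlast, add_zero]
    rw [Finset.sum_range_succ'
      (f := fun k => ((P.choose k * s.descFactorial k : ℕ) : ℂ) • mPoch (sh A k) (P-k))]
    conv_rhs => rw [Finset.sum_range_succ'
      (f := fun k => ((P.choose k * (s+1).descFactorial k : ℕ) : ℂ) • mPoch (sh A k) (P-k))]
    simp only [Nat.descFactorial_zero]
    rw [add_right_comm, ← Finset.sum_add_distrib]
    congr 1
    apply Finset.sum_congr rfl
    intro k _
    rw [← add_smul]
    congr 1
    rw [← Nat.cast_add, nat_coeff]

/-- Key identity (down): `(A - s)_P = ∑_k (-1)^k C(P,k) s^{(k)↓} (A)_{P-k}` -/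
lemma key_down : ∀ (s : ℕ) (A : Mx) (P : ℕ),
    mPoch (A - (s : ℂ) • 1) P
      = ∑ k ∈ range (P+1),
          ((-1 : ℂ)^k * ((P.choose k * s.descFactorial k : ℕ) : ℂ)) • mPoch A (P - k) := by
  intro s
  induction s with
  | zero =>
    intro A P
    rw [Finset.sum_eq_single 0]
    · simp
    · intro k _ hk
      obtain ⟨m, rfl⟩ := Nat.exists_eq_succ_of_ne_zero hk
      simp
    · simp
  | succ s ih =>
    intro A P
    have h0 : A - ((s+1 : ℕ) : ℂ) • 1 = (A - 1) - (s : ℂ) • 1 := by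
      push_cast; rw [add_smul, one_smul]; abel
    have step : ∀ k, ((-1:ℂ)^k * ((P.choose k * s.descFactorial k : ℕ) : ℂ)) • mPoch (A - 1) (P-k)
        = ((-1:ℂ)^k * ((P.choose k * s.descFactorial k : ℕ) : ℂ)) • mPoch A (P-k)
          + ((-1:ℂ)^(k+1) * ((P.choose k * s.descFactorial k * (P - k) : ℕ) : ℂ)) • mPoch A (P-(k+1)) := by
      intro k
      rw [mPoch_shift_neg_one, smul_sub, smul_smul]
      have h2 : P - k - 1 = P - (k+1) := by omega
      rw [h2, sub_eq_add_neg, ← neg_smul]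
      congr 1
      push_cast
      ring
    rw [h0, ih (A - 1) P, Finset.sum_congr rfl fun k _ => step k, Finset.sum_add_distrib]
    have hlast : ((-1:ℂ)^(P+1) * ((P.choose P * s.descFactorial P * (P - P) : ℕ) : ℂ)) • mPoch A (P-(P+1)) = 0 := by
      simp
    rw [Finset.sum_range_succ
      (f := fun k => ((-1:ℂ)^(k+1) * ((P.choose k * s.descFactorial k * (P - k) : ℕ) : ℂ)) • mPoch A (P-(k+1))),
      hlast, add_zero]
    rw [Finset.sum_range_succ'
      (f := fun k => ((-1:ℂ)^k * ((P.choose k * s.descFactorial k : ℕ) : ℂ)) • mPoch A (P-k))]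
    conv_rhs => rw [Finset.sum_range_succ'
      (f := fun k => ((-1:ℂ)^k * ((P.choose k * (s+1).descFactorial k : ℕ) : ℂ)) • mPoch A (P-k))]
    simp only [Nat.descFactorial_zero]
    rw [add_right_comm, ← Finset.sum_add_distrib]
    congr 1
    apply Finset.sum_congr rfl
    intro k _
    rw [← add_smul]
    congr 1
    have := nat_coeff P s k
    have hc : ((P.choose (k+1) * (s+1).descFactorial (k+1) : ℕ) : ℂ)
        = ((P.choose (k+1) * s.descFactorial (k+1) : ℕ) : ℂ)
          + ((P.choose k * s.descFactorial k * (P - k) : ℕ) : ℂ) := by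
      rw [← Nat.cast_add, this]
    rw [hc]
    ring

lemma sum_triangle {α : Type*} [AddCommMonoid α] (f : ℕ → ℕ → α) (n : ℕ) :
    ∑ i ∈ range n, ∑ j ∈ range (n - i), f i j
      = ∑ k ∈ range n, ∑ i ∈ range (k+1), f i (k-i) := by
  induction n with
  | zero => simp
  | succ n ih =>
    have h1 : ∀ i ∈ range (n+1), ∑ j ∈ range (n+1-i), f i j
        = (∑ j ∈ range (n-i), f i j) + f i (n-i) := by
      intro i hi
      have hi' : i ≤ n := by simpa [Nat.lt_succ_iff] using hi
      have : n + 1 - i = (n - i) + 1 := by omega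
      rw [this, Finset.sum_range_succ]
    rw [Finset.sum_congr rfl h1, Finset.sum_add_distrib,
      Finset.sum_range_succ (f := fun i => ∑ j ∈ range (n-i), f i j)]
    simp only [Nat.sub_self, Finset.range_zero, Finset.sum_empty, add_zero]
    rw [ih, Finset.sum_range_succ (f := fun k => ∑ i ∈ range (k+1), f i (k-i)),
      Finset.sum_range_succ (f := fun i => f i (n-i))]

lemma vander (M N k : ℕ) :
    ∑ i ∈ range (k+1), M.choose i * N.choose (k-i) = (M+N).choose k := by
  rw [Nat.add_choose_eq, Finset.Nat.sum_antidiagonal_eq_sum_range_succ_mk]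

lemma coeff_sum (s M N : ℕ) (X : ℕ → Mx) :
    ∑ k₁ ∈ range (s+1), ∑ k₂ ∈ range (s+1-k₁),
      ((M.choose k₁ * N.choose k₂ * s.descFactorial (k₁+k₂) : ℕ) : ℂ) • X (k₁+k₂)
    = ∑ k ∈ range (M+N+1), (((M+N).choose k * s.descFactorial k : ℕ) : ℂ) • X k := by
  rw [sum_triangle (f := fun i j =>
    ((M.choose i * N.choose j * s.descFactorial (i+j) : ℕ) : ℂ) • X (i+j)) (s+1)]
  have inner : ∀ k ∈ range (s+1),
      (∑ i ∈ range (k+1),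
        ((M.choose i * N.choose (k-i) * s.descFactorial (i+(k-i)) : ℕ) : ℂ) • X (i+(k-i)))
      = (((M+N).choose k * s.descFactorial k : ℕ) : ℂ) • X k := by
    intro k _
    have h : ∀ i ∈ range (k+1),
        ((M.choose i * N.choose (k-i) * s.descFactorial (i+(k-i)) : ℕ) : ℂ) • X (i+(k-i))
        = ((M.choose i * N.choose (k-i) : ℕ) : ℂ) • (((s.descFactorial k : ℕ) : ℂ) • X k) := by
      intro i hi
      have hik : i + (k - i) = k := by
        have : i ≤ k := by simpa [Nat.lt_succ_iff] using hi
        omega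
      rw [hik, Nat.cast_mul, mul_smul]
    rw [Finset.sum_congr rfl h, ← Finset.sum_smul, ← Nat.cast_sum, vander, smul_smul,
      ← Nat.cast_mul]
  rw [Finset.sum_congr rfl inner]
  have big : ∀ L : ℕ, s + 1 ≤ L → M + N + 1 ≤ L →
      (∑ k ∈ range (s+1), (((M+N).choose k * s.descFactorial k : ℕ) : ℂ) • X k
        = ∑ k ∈ range L, (((M+N).choose k * s.descFactorial k : ℕ) : ℂ) • X k)
      ∧ (∑ k ∈ range (M+N+1), (((M+N).choose k * s.descFactorial k : ℕ) : ℂ) • X k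
        = ∑ k ∈ range L, (((M+N).choose k * s.descFactorial k : ℕ) : ℂ) • X k) := by
    intro L hL1 hL2
    constructor
    · apply Finset.sum_subset (Finset.range_subset_range.2 hL1)
      intro k _ hk
      have : s < k := by
        by_contra h
        exact hk (Finset.mem_range.2 (by omega))
      rw [Nat.descFactorial_of_lt this]
      simp
    · apply Finset.sum_subset (Finset.range_subset_range.2 hL2)
      intro k _ hk
      have : M + N < k := by
        by_contra h
        exact hk (Finset.mem_range.2 (by omega))
      rw [Nat.choose_eq_zero_of_lt this]
      simp
  obtain ⟨e1, e2⟩ := big (s + M + N + 2) (by omega) (by omega)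
  rw [e1, e2]

/-! ### A sub-multiplicative "norm" on matrices (max row sum) -/

noncomputable def nn (A : Mx) : ℝ≥0 := Finset.univ.sup fun i => ∑ j, ‖A i j‖₊

lemma rowsum_le_nn (A : Mx) (i : Fin r) : ∑ j, ‖A i j‖₊ ≤ nn A :=
  Finset.le_sup (f := fun i => ∑ j, ‖A i j‖₊) (Finset.mem_univ i)

lemma entry_le_nn (A : Mx) (i j : Fin r) : ‖A i j‖₊ ≤ nn A :=
  le_trans (Finset.single_le_sum (f := fun j => ‖A i j‖₊) (fun _ _ => zero_le)
    (Finset.mem_univ j)) (rowsum_le_nn A i)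

lemma nn_one_le : nn (1 : Mx) ≤ 1 := by
  apply Finset.sup_le
  intro i _
  have : ∀ j, ‖(1 : Mx) i j‖₊ = if j = i then 1 else 0 := by
    intro j
    rw [Matrix.one_apply]
    by_cases h : i = j <;> simp [h, eq_comm]
  rw [Finset.sum_congr rfl fun j _ => this j, Finset.sum_ite_eq' Finset.univ i (fun _ => (1:ℝ≥0))]
  simp

lemma nn_mul_le (A B : Mx) : nn (A * B) ≤ nn A * nn B := by
  apply Finset.sup_le
  intro i _
  calc ∑ j, ‖(A * B) i j‖₊ ≤ ∑ j, ∑ k, ‖A i k‖₊ * ‖B k j‖₊ := by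
        apply Finset.sum_le_sum
        intro j _
        rw [Matrix.mul_apply]
        exact le_trans (nnnorm_sum_le _ _) (Finset.sum_le_sum fun k _ => le_of_eq (nnnorm_mul _ _))
    _ = ∑ k, ‖A i k‖₊ * ∑ j, ‖B k j‖₊ := by
        rw [Finset.sum_comm]
        exact Finset.sum_congr rfl fun k _ => (Finset.mul_sum _ _ _).symm
    _ ≤ ∑ k, ‖A i k‖₊ * nn B :=
        Finset.sum_le_sum fun k _ => mul_le_mul_right (rowsum_le_nn B k) _
    _ = (∑ k, ‖A i k‖₊) * nn B := by rw [Finset.sum_mul]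
    _ ≤ nn A * nn B := mul_le_mul_left (rowsum_le_nn A i) _

lemma nn_smul (c : ℂ) (A : Mx) : nn (c • A) = ‖c‖₊ * nn A := by
  unfold nn
  rw [NNReal.mul_finset_sup]
  apply Finset.sup_congr rfl
  intro i _
  rw [Finset.mul_sum]
  apply Finset.sum_congr rfl
  intro j _
  simp [Matrix.smul_apply, nnnorm_mul]

lemma nn_add_le (A B : Mx) : nn (A + B) ≤ nn A + nn B := by
  apply Finset.sup_le
  intro i _
  calc ∑ j, ‖(A + B) i j‖₊ ≤ ∑ j, (‖A i j‖₊ + ‖B i j‖₊) :=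
        Finset.sum_le_sum fun j _ => nnnorm_add_le _ _
    _ = (∑ j, ‖A i j‖₊) + ∑ j, ‖B i j‖₊ := Finset.sum_add_distrib
    _ ≤ nn A + nn B := add_le_add (rowsum_le_nn A i) (rowsum_le_nn B i)

lemma nn_neg (A : Mx) : nn (-A) = nn A := by
  unfold nn
  apply Finset.sup_congr rfl
  intro i _
  exact Finset.sum_congr rfl fun j _ => by simp

/-- bound on the inverse of `C + mI` -/
lemma nn_inv_sh_le (C : Mx) (m : ℕ) (hU : IsUnit (sh C m)) (h : (nn C : ℝ) < m) :
    (nn ((sh C m)⁻¹) : ℝ) ≤ 1 / (m - nn C) := by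
  set U := (sh C m)⁻¹ with hUdef
  have hd : IsUnit (sh C m).det := (Matrix.isUnit_iff_isUnit_det _).mp hU
  have h1 : sh C m * U = 1 := Matrix.mul_nonsing_inv _ hd
  have h2 : ((m : ℂ) • U) = 1 + (-(C * U)) := by
    have : C * U + (m : ℂ) • U = 1 := by
      rw [← h1]; unfold sh; rw [Matrix.add_mul, Matrix.smul_mul, Matrix.one_mul]
    rw [← this]; abel
  have h3 : (m : ℝ≥0) * nn U ≤ 1 + nn C * nn U := by
    have e1 : nn ((m : ℂ) • U) = (m : ℝ≥0) * nn U := by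
      rw [nn_smul]
      congr 1
      simp [nnnorm]
    calc (m : ℝ≥0) * nn U = nn (1 + (-(C * U))) := by rw [← e1, h2]
      _ ≤ nn (1 : Mx) + nn (-(C * U)) := nn_add_le _ _
      _ ≤ 1 + nn C * nn U := by
          rw [nn_neg]
          exact add_le_add nn_one_le (nn_mul_le _ _)
  have h3' : (m : ℝ) * (nn U : ℝ) ≤ 1 + (nn C : ℝ) * (nn U : ℝ) := by
    exact_mod_cast h3
  have hpos : (0 : ℝ) < m - nn C := by linarith
  rw [le_div_iff₀ hpos]
  nlinarith [(nn U).coe_nonneg]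

/-- generic comparison via eventual ratio domination -/
lemma ratio_bound (u v : ℕ → ℝ) (hu : ∀ n, 0 ≤ u n) (hv : ∀ n, 0 < v n) (n₀ : ℕ)
    (h : ∀ n, n₀ ≤ n → u (n+1) * v n ≤ u n * v (n+1)) :
    ∃ K : ℝ, 0 ≤ K ∧ ∀ n, u n ≤ K * v n := by
  refine ⟨∑ i ∈ range (n₀+1), u i / v i,
    Finset.sum_nonneg fun i _ => div_nonneg (hu i) (hv i).le, ?_⟩
  have hK : ∀ i, i ≤ n₀ → u i / v i ≤ ∑ i ∈ range (n₀+1), u i / v i := fun i hi =>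
    Finset.single_le_sum (fun j _ => div_nonneg (hu j) (hv j).le)
      (Finset.mem_range.2 (by omega))
  have hdv : ∀ i, i ≤ n₀ → u i ≤ (∑ i ∈ range (n₀+1), u i / v i) * v i := by
    intro i hi
    calc u i = (u i / v i) * v i := (div_mul_cancel₀ _ (hv i).ne').symm
      _ ≤ _ := mul_le_mul_of_nonneg_right (hK i hi) (hv i).le
  intro n
  rcases le_or_gt n n₀ with hn | hn
  · exact hdv n hn
  · have key : ∀ m : ℕ, u (n₀ + m) ≤ (u n₀ / v n₀) * v (n₀ + m) := by
      intro m
      induction m with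
      | zero => exact le_of_eq (div_mul_cancel₀ _ (hv n₀).ne').symm
      | succ m ih =>
        have h2 := h (n₀+m) (by omega)
        have hvpos := hv (n₀+m)
        have step : u (n₀+m+1) ≤ u (n₀+m) * v (n₀+m+1) / v (n₀+m) := by
          rw [le_div_iff₀ hvpos]; linarith
        calc u (n₀+(m+1)) = u (n₀+m+1) := by rw [← add_assoc]
          _ ≤ u (n₀+m) * v (n₀+m+1) / v (n₀+m) := step
          _ ≤ ((u n₀ / v n₀) * v (n₀+m)) * v (n₀+m+1) / v (n₀+m) := by
              gcongr
              exact (hv _).le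
          _ = (u n₀ / v n₀) * v (n₀+m+1) * (v (n₀+m) / v (n₀+m)) := by ring
          _ = (u n₀ / v n₀) * v (n₀+m+1) := by rw [div_self hvpos.ne', mul_one]
          _ = (u n₀ / v n₀) * v (n₀+(m+1)) := by rw [← add_assoc]
    obtain ⟨m, rfl⟩ : ∃ m, n = n₀ + m := ⟨n - n₀, by omega⟩
    calc u (n₀ + m) ≤ (u n₀ / v n₀) * v (n₀ + m) := key m
      _ ≤ _ := mul_le_mul_of_nonneg_right (hK n₀ le_rfl) (hv _).le

lemma nn_nat_smul_one (n : ℕ) : nn ((n : ℂ) • (1 : Mx)) ≤ (n : ℝ≥0) := by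
  rw [nn_smul]
  have h1 : ‖((n : ℕ) : ℂ)‖₊ = (n : ℝ≥0) := by simp [nnnorm]
  rw [h1]
  calc (n : ℝ≥0) * nn (1 : Mx) ≤ (n : ℝ≥0) * 1 := mul_le_mul_right nn_one_le _
    _ = n := mul_one _

lemma nn_sh_le (A : Mx) (n : ℕ) : nn (sh A n) ≤ nn A + n :=
  le_trans (nn_add_le _ _) (add_le_add_right (nn_nat_smul_one n) _)

lemma poch_growth (A : Mx) (ρ : ℝ) (hρ : 1 < ρ) :
    ∃ K : ℝ, 0 ≤ K ∧ ∀ n, (nn (mPoch A n) : ℝ) ≤ K * ((n.factorial : ℝ) * ρ ^ n) := by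
  obtain ⟨n₀, hn₀⟩ := exists_nat_ge ((nn A : ℝ) / (ρ - 1))
  apply ratio_bound _ _ (fun n => (nn (mPoch A n)).coe_nonneg)
    (fun n => by positivity) n₀
  intro n hn
  have h1 : (nn (mPoch A (n+1)) : ℝ) ≤ (nn (mPoch A n) : ℝ) * ((nn A : ℝ) + n) := by
    have := le_trans (nn_mul_le (mPoch A n) (sh A n))
      (mul_le_mul_right (nn_sh_le A n) (nn (mPoch A n)))
    rw [← mPoch_succ] at this
    exact_mod_cast this
  have h2 : (nn A : ℝ) + n ≤ ((n:ℝ)+1) * ρ := by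
    have hle : (nn A : ℝ) / (ρ - 1) ≤ ((n : ℝ) + 1) := by
      calc (nn A : ℝ) / (ρ - 1) ≤ (n₀ : ℝ) := hn₀
        _ ≤ (n : ℝ) + 1 := by exact_mod_cast Nat.le_succ_of_le hn
    have := (div_le_iff₀ (by linarith : (0:ℝ) < ρ - 1)).mp hle
    nlinarith
  have hvpos : (0:ℝ) < (n.factorial : ℝ) * ρ ^ n := by positivity
  have hu : (0:ℝ) ≤ (nn (mPoch A n) : ℝ) := (nn (mPoch A n)).coe_nonneg
  calc (nn (mPoch A (n+1)) : ℝ) * ((n.factorial : ℝ) * ρ ^ n)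
      ≤ ((nn (mPoch A n) : ℝ) * (((n:ℝ)+1) * ρ)) * ((n.factorial : ℝ) * ρ ^ n) := by
        apply mul_le_mul_of_nonneg_right _ hvpos.le
        exact le_trans h1 (mul_le_mul_of_nonneg_left h2 hu)
    _ = (nn (mPoch A n) : ℝ) * (((n+1).factorial : ℝ) * ρ ^ (n+1)) := by
        rw [Nat.factorial_succ]; push_cast; ring

lemma poch_inv_decay (C : Mx) (hC : ∀ n : ℕ, IsUnit (sh C n)) (ρ : ℝ) (hρ : 1 < ρ) :
    ∃ K : ℝ, 0 ≤ K ∧ ∀ n, (nn ((mPoch C n)⁻¹) : ℝ) ≤ K * (ρ ^ n / (n.factorial : ℝ)) := by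
  obtain ⟨n₀, hn₀⟩ := exists_nat_ge (max ((1 + ρ * (nn C : ℝ))/(ρ-1)) ((nn C : ℝ) + 1))
  apply ratio_bound _ _ (fun n => (nn ((mPoch C n)⁻¹)).coe_nonneg)
    (fun n => by positivity) n₀
  intro n hn
  have hnn : (n₀ : ℝ) ≤ (n : ℝ) := by exact_mod_cast hn
  have hmax1 : (1 + ρ * (nn C : ℝ))/(ρ-1) ≤ (n : ℝ) :=
    le_trans (le_trans (le_max_left _ _) hn₀) hnn
  have hmax2 : (nn C : ℝ) + 1 ≤ (n : ℝ) :=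
    le_trans (le_trans (le_max_right _ _) hn₀) hnn
  have hCn : (nn C : ℝ) < n := by linarith
  have h2 : 1 + ρ * (nn C : ℝ) ≤ (ρ - 1) * n := by
    have := (div_le_iff₀ (by linarith : (0:ℝ) < ρ - 1)).mp hmax1
    linarith
  have h1 : (nn ((mPoch C (n+1))⁻¹) : ℝ) ≤ (1 / ((n:ℝ) - nn C)) * (nn ((mPoch C n)⁻¹) : ℝ) := by
    have e1 : (mPoch C (n+1))⁻¹ = (sh C n)⁻¹ * (mPoch C n)⁻¹ := by
      rw [mPoch_succ, Matrix.mul_inv_rev]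
    have e2 : (nn ((sh C n)⁻¹ * (mPoch C n)⁻¹) : ℝ) ≤ (nn ((sh C n)⁻¹) : ℝ) * (nn ((mPoch C n)⁻¹) : ℝ) := by
      exact_mod_cast nn_mul_le _ _
    rw [e1]
    refine le_trans e2 (mul_le_mul_of_nonneg_right ?_ (nn _).coe_nonneg)
    exact nn_inv_sh_le C n (hC n) hCn
  have hratio : 1 / ((n:ℝ) - nn C) ≤ ρ / ((n:ℝ)+1) := by
    rw [div_le_div_iff₀ (by linarith) (by positivity)]
    nlinarith
  have hvpos : (0:ℝ) < ρ ^ n / (n.factorial : ℝ) := by positivity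
  have hu : (0:ℝ) ≤ (nn ((mPoch C n)⁻¹) : ℝ) := (nn _).coe_nonneg
  have hfin : (nn ((mPoch C (n+1))⁻¹) : ℝ) ≤ (nn ((mPoch C n)⁻¹) : ℝ) * (ρ / ((n:ℝ)+1)) := by
    calc (nn ((mPoch C (n+1))⁻¹) : ℝ) ≤ (1 / ((n:ℝ) - nn C)) * (nn ((mPoch C n)⁻¹) : ℝ) := h1
      _ ≤ (ρ / ((n:ℝ)+1)) * (nn ((mPoch C n)⁻¹) : ℝ) := mul_le_mul_of_nonneg_right hratio hu
      _ = _ := mul_comm _ _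
  calc (nn ((mPoch C (n+1))⁻¹) : ℝ) * (ρ ^ n / (n.factorial : ℝ))
      ≤ ((nn ((mPoch C n)⁻¹) : ℝ) * (ρ / ((n:ℝ)+1))) * (ρ ^ n / (n.factorial : ℝ)) :=
        mul_le_mul_of_nonneg_right hfin hvpos.le
    _ = (nn ((mPoch C n)⁻¹) : ℝ) * (ρ ^ (n+1) / ((n+1).factorial : ℝ)) := by
        rw [Nat.factorial_succ]
        have hf : ((n.factorial : ℝ)) ≠ 0 := by positivity
        push_cast
        field_simp
        ring

lemma sh_sh (A : Mx) (k m : ℕ) : sh (sh A k) m = sh A (k + m) := by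
  unfold sh; push_cast; rw [add_smul]; abel

/-- The summand of the Appell F4 series. -/
noncomputable def term (A B C C' : Mx) (x y : ℂ) (p : ℕ × ℕ) : Mx :=
  (((p.1.factorial : ℂ) * (p.2.factorial : ℂ))⁻¹ * x ^ p.1 * y ^ p.2) •
    (mPoch A (p.1 + p.2) * mPoch B (p.1 + p.2) * (mPoch C p.1)⁻¹ * (mPoch C' p.2)⁻¹)

lemma binom_le (a b : ℝ) (ha : 0 ≤ a) (hb : 0 ≤ b) (m n : ℕ) :
    ((m+n).choose m : ℝ) * a^m * b^n ≤ (a+b)^(m+n) := by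
  rw [add_pow]
  have hm : m ∈ range (m+n+1) := mem_range.2 (by omega)
  refine le_trans (le_of_eq ?_) (Finset.single_le_sum
    (f := fun i => a^i * b^(m+n-i) * ((m+n).choose i : ℝ)) (fun i _ => by positivity) hm)
  show _ = a ^ m * b ^ (m + n - m) * ((m+n).choose m : ℝ)
  rw [Nat.add_sub_cancel_left]
  ring

lemma key_calc (fm fn F Cc ρ ax ay KA KB KC KD : ℝ) (hm0 : fm ≠ 0) (hn0 : fn ≠ 0)
    (hch : Cc * fm * fn = F) (m n : ℕ) :
    (fm * fn)⁻¹ * ax^m * ay^n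
      * ((KA * (F * ρ^(m+n))) * (KB * (F * ρ^(m+n))) * (KC * (ρ^m / fm)) * (KD * (ρ^n / fn)))
    = (KA*KB*KC*KD) * (Cc^2 * ((ρ^3*ax)^m * (ρ^3*ay)^n)) := by
  rw [← hch]
  field_simp
  ring

set_option maxHeartbeats 1000000 in
lemma summable_term (A B C C' : Mx) (x y : ℂ)
    (hC : ∀ n : ℕ, IsUnit (sh C n)) (hC' : ∀ n : ℕ, IsUnit (sh C' n))
    (hxy : Real.sqrt ‖x‖ + Real.sqrt ‖y‖ < 1) :
    Summable (term A B C C' x y) := by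
  classical
  have hxy' : Real.sqrt ‖x‖ + Real.sqrt ‖y‖ < 1 := by
    exact hxy
  set ax := ‖x‖ with haxd
  set ay := ‖y‖ with hayd
  have hax0 : 0 ≤ ax := norm_nonneg x
  have hay0 : 0 ≤ ay := norm_nonneg y
  set δ := Real.sqrt ax + Real.sqrt ay with hδd
  have hδ0 : 0 ≤ δ := by positivity
  rcases eq_or_lt_of_le hδ0 with hδz | hδpos
  · -- degenerate case x = y = 0
    have hsx : Real.sqrt ax = 0 := by
      have := Real.sqrt_nonneg ax
      have := Real.sqrt_nonneg ay
      simp only [hδd] at hδz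
      linarith
    have hsy : Real.sqrt ay = 0 := by
      have := Real.sqrt_nonneg ax
      have := Real.sqrt_nonneg ay
      simp only [hδd] at hδz
      linarith
    have hx0 : x = 0 := by
      have h1 : ax ≤ 0 := Real.sqrt_eq_zero'.mp hsx
      have : ax = 0 := le_antisymm h1 hax0
      rwa [haxd, norm_eq_zero] at this
    have hy0 : y = 0 := by
      have h1 : ay ≤ 0 := Real.sqrt_eq_zero'.mp hsy
      have : ay = 0 := le_antisymm h1 hay0
      rwa [hayd, norm_eq_zero] at this
    apply summable_of_ne_finset_zero (s := {((0:ℕ),(0:ℕ))})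
    intro p hp
    have hne : p.1 ≠ 0 ∨ p.2 ≠ 0 := by
      by_contra h
      push_neg at h
      exact hp (by
        simp only [Finset.mem_singleton]
        exact Prod.ext h.1 h.2)
    unfold term
    rcases hne with h | h
    · rw [hx0, zero_pow h]
      simp
    · rw [hy0, zero_pow h]
      simp
  · -- main case
    have hδ1 : δ < 1 := hxy'
    set sδ := Real.sqrt δ with hsδd
    have hsδpos : 0 < sδ := Real.sqrt_pos.2 hδpos
    have hsδsq : sδ ^ 2 = δ := Real.sq_sqrt hδpos.le
    have hsδ1 : sδ < 1 := by nlinarith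
    set ρ := sδ⁻¹ with hρd
    have hρpos : 0 < ρ := by positivity
    have hsρ : sδ * ρ = 1 := mul_inv_cancel₀ hsδpos.ne'
    have hρ : 1 < ρ := by nlinarith
    obtain ⟨KA, hKA0, hKA⟩ := poch_growth A ρ hρ
    obtain ⟨KB, hKB0, hKB⟩ := poch_growth B ρ hρ
    obtain ⟨KC, hKC0, hKC⟩ := poch_inv_decay C hC ρ hρ
    obtain ⟨KD, hKD0, hKD⟩ := poch_inv_decay C' hC' ρ hρ
    set u := ρ^3 * ax with hud
    set v := ρ^3 * ay with hvd
    have hu0 : 0 ≤ u := by positivity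
    have hv0 : 0 ≤ v := by positivity
    set q := (Real.sqrt u + Real.sqrt v)^2 with hqd
    have hq0 : 0 ≤ q := sq_nonneg _
    have hq1 : q < 1 := by
      have e1 : Real.sqrt u = Real.sqrt (ρ^3) * Real.sqrt ax := Real.sqrt_mul (by positivity) _
      have e2 : Real.sqrt v = Real.sqrt (ρ^3) * Real.sqrt ay := Real.sqrt_mul (by positivity) _
      have e4 : q = ρ^3 * δ^2 := by
        rw [hqd, e1, e2, ← mul_add, mul_pow, Real.sq_sqrt (by positivity : (0:ℝ) ≤ ρ^3)]
      have e5 : ρ^3 * δ^2 = sδ := by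
        rw [← hsδsq, hρd]
        field_simp
      rw [e4, e5]
      exact hsδ1
    set K := KA * KB * KC * KD with hKd
    have hK0 : 0 ≤ K := by positivity
    have hbound : ∀ (p : ℕ × ℕ) (i j : Fin r),
        ‖term A B C C' x y p i j‖ ≤ K * q ^ (p.1 + p.2) := by
      rintro ⟨m, n⟩ i j
      set P1 := mPoch A (m+n)
      set P2 := mPoch B (m+n)
      set P3 := (mPoch C m)⁻¹
      set P4 := (mPoch C' n)⁻¹
      have hsc : ‖(((m.factorial : ℂ) * (n.factorial : ℂ))⁻¹ * x ^ m * y ^ n)‖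
          = ((m.factorial : ℝ) * (n.factorial : ℝ))⁻¹ * ax^m * ay^n := by
        rw [norm_mul, norm_mul, norm_inv, norm_pow, norm_pow, norm_mul]
        simp only [Complex.norm_natCast, ← haxd, ← hayd]
      have hterm : ‖term A B C C' x y (m, n) i j‖
          = ((m.factorial : ℝ) * (n.factorial : ℝ))⁻¹ * ax^m * ay^n * ‖(P1 * P2 * P3 * P4) i j‖ := by
        show ‖((((m.factorial : ℂ) * (n.factorial : ℂ))⁻¹ * x ^ m * y ^ n) • (P1 * P2 * P3 * P4)) i j‖ = _
        rw [Matrix.smul_apply, smul_eq_mul, norm_mul, hsc]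
      have hentry : ‖(P1 * P2 * P3 * P4) i j‖ ≤ ((nn (P1*P2*P3*P4) : ℝ≥0) : ℝ) := by
        exact_mod_cast entry_le_nn (P1*P2*P3*P4) i j
      have hprod : (nn (P1*P2*P3*P4) : ℝ) ≤ (nn P1 : ℝ) * nn P2 * nn P3 * nn P4 := by
        exact_mod_cast le_trans (nn_mul_le _ P4)
          (mul_le_mul_left (le_trans (nn_mul_le _ P3)
            (mul_le_mul_left (nn_mul_le P1 P2) _)) _)
      have h1 := hKA (m+n)
      have h2 := hKB (m+n)
      have h3 := hKC m
      have h4 := hKD n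
      have n1 := (nn P1).coe_nonneg
      have n2 := (nn P2).coe_nonneg
      have n3 := (nn P3).coe_nonneg
      have n4 := (nn P4).coe_nonneg
      have hb : (nn P1:ℝ) * nn P2 * nn P3 * nn P4
          ≤ (KA * (((m+n).factorial : ℝ) * ρ^(m+n))) * (KB * (((m+n).factorial : ℝ) * ρ^(m+n)))
            * (KC * (ρ^m / (m.factorial:ℝ))) * (KD * (ρ^n / (n.factorial:ℝ))) := by
        apply mul_le_mul _ h4 n4
        · positivity
        apply mul_le_mul _ h3 n3
        · positivity
        apply mul_le_mul h1 h2 n2 (le_trans n1 h1)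
      have hch : ((m+n).choose m : ℝ) * (m.factorial:ℝ) * (n.factorial:ℝ) = ((m+n).factorial : ℝ) := by
        have h := Nat.choose_mul_factorial_mul_factorial (Nat.le_add_right m n)
        rw [Nat.add_sub_cancel_left] at h
        exact_mod_cast h
      have hm0 : (m.factorial:ℝ) ≠ 0 := by positivity
      have hn0 : (n.factorial:ℝ) ≠ 0 := by positivity
      have key : ((m.factorial : ℝ) * (n.factorial : ℝ))⁻¹ * ax^m * ay^n
            * ((KA * (((m+n).factorial : ℝ) * ρ^(m+n))) * (KB * (((m+n).factorial : ℝ) * ρ^(m+n)))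
              * (KC * (ρ^m / (m.factorial:ℝ))) * (KD * (ρ^n / (n.factorial:ℝ))))
          = K * (((m+n).choose m : ℝ)^2 * (u^m * v^n)) :=
        key_calc (m.factorial:ℝ) (n.factorial:ℝ) ((m+n).factorial : ℝ) ((m+n).choose m : ℝ)
          ρ ax ay KA KB KC KD hm0 hn0 hch m n
      have hsq : ((m+n).choose m : ℝ)^2 * (u^m * v^n) ≤ q^(m+n) := by
        have hbinom := binom_le (Real.sqrt u) (Real.sqrt v)
          (Real.sqrt_nonneg _) (Real.sqrt_nonneg _) m n
        have hnn : 0 ≤ ((m+n).choose m : ℝ) * (Real.sqrt u)^m * (Real.sqrt v)^n := by positivity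
        have eu : ((Real.sqrt u)^m)^2 = u^m := by
          rw [← pow_mul, mul_comm m 2, pow_mul, Real.sq_sqrt hu0]
        have ev : ((Real.sqrt v)^n)^2 = v^n := by
          rw [← pow_mul, mul_comm n 2, pow_mul, Real.sq_sqrt hv0]
        calc ((m+n).choose m : ℝ)^2 * (u^m * v^n)
            = (((m+n).choose m : ℝ) * (Real.sqrt u)^m * (Real.sqrt v)^n)^2 := by
              rw [← eu, ← ev]; ring
          _ ≤ ((Real.sqrt u + Real.sqrt v)^(m+n))^2 := by
              apply pow_le_pow_left₀ hnn hbinom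
          _ = q^(m+n) := by rw [hqd, ← pow_mul, mul_comm (m+n) 2, pow_mul]
      calc ‖term A B C C' x y (m, n) i j‖
          = ((m.factorial : ℝ) * (n.factorial : ℝ))⁻¹ * ax^m * ay^n * ‖(P1 * P2 * P3 * P4) i j‖ := hterm
        _ ≤ ((m.factorial : ℝ) * (n.factorial : ℝ))⁻¹ * ax^m * ay^n
            * ((KA * (((m+n).factorial : ℝ) * ρ^(m+n))) * (KB * (((m+n).factorial : ℝ) * ρ^(m+n)))
              * (KC * (ρ^m / (m.factorial:ℝ))) * (KD * (ρ^n / (n.factorial:ℝ)))) := by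
            apply mul_le_mul_of_nonneg_left _ (by positivity)
            exact le_trans hentry (le_trans hprod hb)
        _ = K * (((m+n).choose m : ℝ)^2 * (u^m * v^n)) := key
        _ ≤ K * q^(m+n) := mul_le_mul_of_nonneg_left hsq hK0
    -- summability of the bound
    have hgeo : Summable (fun k : ℕ => q ^ k) := summable_geometric_of_lt_one hq0 hq1
    have hsum2 : Summable (fun p : ℕ × ℕ => (K * q ^ p.1) * q ^ p.2) :=
      (hgeo.mul_left K).mul_of_nonneg hgeo (fun k => by positivity) (fun k => by positivity)
    have hsumK : Summable (fun p : ℕ × ℕ => K * q ^ (p.1 + p.2)) := by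
      apply hsum2.congr
      intro p
      rw [pow_add]
      ring
    apply Pi.summable.2
    intro i
    rw [Pi.summable]
    intro j
    apply Summable.of_norm
    apply Summable.of_nonneg_of_le (fun p => norm_nonneg _) (fun p => hbound p i j) hsumK

lemma sh_cast_add (A : Mx) (k₁ k₂ : ℕ) : A + ((k₁ : ℂ) + (k₂ : ℂ)) • 1 = sh A (k₁ + k₂) := by
  unfold sh; push_cast; ring_nf

lemma shuffle (a d b p q P Q M I1 I2 : Mx) (h1 : a * d = d * a) (h2 : a * b = M)
    (h3 : q * P = P * q) (h4 : p * P = I1) (h5 : q * Q = I2) :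
    a * (d * b * p * q) * P * Q = d * M * I1 * I2 := by
  calc a * (d * b * p * q) * P * Q = (a * d) * b * p * q * P * Q := by noncomm_ring
    _ = (d * a) * b * p * q * P * Q := by rw [h1]
    _ = d * (a * b) * p * q * P * Q := by noncomm_ring
    _ = d * M * p * q * P * Q := by rw [h2]
    _ = d * M * p * (q * P) * Q := by noncomm_ring
    _ = d * M * p * (P * q) * Q := by rw [h3]
    _ = d * M * (p * P) * (q * Q) := by noncomm_ring
    _ = d * M * I1 * I2 := by rw [h4, h5]

lemma mat_rearrange (D B C C' : Mx) (hDB : Commute B D) (hCC' : C * C' = C' * C)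
    (hC : ∀ n : ℕ, IsUnit (sh C n)) (hC' : ∀ n : ℕ, IsUnit (sh C' n)) (k₁ k₂ m n N : ℕ) :
    mPoch B (k₁+k₂) * (mPoch D N * mPoch (sh B (k₁+k₂)) N
        * (mPoch (sh C k₁) m)⁻¹ * (mPoch (sh C' k₂) n)⁻¹) * (mPoch C k₁)⁻¹ * (mPoch C' k₂)⁻¹
    = mPoch D N * mPoch B (N + (k₁+k₂)) * (mPoch C (k₁+m))⁻¹ * (mPoch C' (k₂+n))⁻¹ := by
  set k := k₁ + k₂ with hkd
  have c1 : Commute (mPoch B k) (mPoch D N) := commute_mPoch hDB k N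
  have e2 : mPoch B k * mPoch (sh B k) N = mPoch B (N + k) := by
    rw [add_comm N k]; exact (mPoch_add B k N).symm
  have u1 : IsUnit (mPoch C k₁) := mPoch_isUnit hC k₁
  have u2 : IsUnit (mPoch (sh C' k₂) n) :=
    mPoch_isUnit (fun j => by rw [sh_sh]; exact hC' (k₂ + j)) n
  have cbase : Commute (mPoch (sh C' k₂) n) (mPoch C k₁) :=
    (commute_mPoch ((commute_sh (show Commute C C' from hCC') k₂)) k₁ n).symm
  have c3 : Commute ((mPoch (sh C' k₂) n)⁻¹) ((mPoch C k₁)⁻¹) :=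
    commute_inv_right ((commute_inv_right cbase.symm u2).symm) u1
  have e3 : (mPoch (sh C k₁) m)⁻¹ * (mPoch C k₁)⁻¹ = (mPoch C (k₁+m))⁻¹ :=
    (mPoch_inv_add C k₁ m).symm
  have e4 : (mPoch (sh C' k₂) n)⁻¹ * (mPoch C' k₂)⁻¹ = (mPoch C' (k₂+n))⁻¹ :=
    (mPoch_inv_add C' k₂ n).symm
  exact shuffle _ _ _ _ _ _ _ _ _ _ c1.eq e2 c3.eq e3 e4

lemma scalar_eq (x y ε : ℂ) (s k₁ k₂ m n : ℕ) (hk : k₁ + k₂ ≤ s) :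
    ((s.factorial : ℂ) / ((k₁.factorial:ℂ) * (k₂.factorial:ℂ) * ((s-k₁-k₂).factorial:ℂ)))
        * (ε*x)^k₁ * (ε*y)^k₂ * (((m.factorial:ℂ)*(n.factorial:ℂ))⁻¹ * x^m * y^n)
    = (((m+k₁).factorial:ℂ)*((n+k₂).factorial:ℂ))⁻¹ * x^(m+k₁) * y^(n+k₂)
        * (ε^(k₁+k₂) * (((m+k₁).choose k₁ * ((n+k₂).choose k₂) * s.descFactorial (k₁+k₂) : ℕ):ℂ)) := by
  have h2 : s - k₁ - k₂ = s - (k₁+k₂) := by omega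
  have e1 : s.descFactorial (k₁+k₂) * (s-(k₁+k₂)).factorial = s.factorial := by
    rw [Nat.descFactorial_eq_factorial_mul_choose, ← Nat.choose_mul_factorial_mul_factorial hk]
    ring
  have e2 : (m+k₁).choose k₁ * k₁.factorial * m.factorial = (m+k₁).factorial := by
    have h := Nat.choose_mul_factorial_mul_factorial (Nat.le_add_left k₁ m)
    rwa [Nat.add_sub_cancel] at h
  have e3 : (n+k₂).choose k₂ * k₂.factorial * n.factorial = (n+k₂).factorial := by
    have h := Nat.choose_mul_factorial_mul_factorial (Nat.le_add_left k₂ n)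
    rwa [Nat.add_sub_cancel] at h
  have E1 : (s.factorial : ℂ) = (s.descFactorial (k₁+k₂) : ℂ) * ((s-(k₁+k₂)).factorial : ℂ) := by
    exact_mod_cast e1.symm
  have E2 : ((m+k₁).factorial : ℂ) = ((m+k₁).choose k₁ : ℂ) * (k₁.factorial:ℂ) * (m.factorial:ℂ) := by
    exact_mod_cast e2.symm
  have E3 : ((n+k₂).factorial : ℂ) = ((n+k₂).choose k₂ : ℂ) * (k₂.factorial:ℂ) * (n.factorial:ℂ) := by
    exact_mod_cast e3.symm
  rw [h2, E1, E2, E3, Nat.add_comm m k₁, Nat.add_comm n k₂]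
  push_cast
  have hne : ∀ t : ℕ, (t.factorial : ℂ) ≠ 0 := fun t => by
    exact_mod_cast Nat.cast_ne_zero.mpr t.factorial_ne_zero
  have hc1 : (((k₁+m).choose k₁ : ℕ) : ℂ) ≠ 0 :=
    Nat.cast_ne_zero.mpr (Nat.choose_pos (Nat.le_add_right k₁ m)).ne'
  have hc2 : (((k₂+n).choose k₂ : ℕ) : ℂ) ≠ 0 :=
    Nat.cast_ne_zero.mpr (Nat.choose_pos (Nat.le_add_right k₂ n)).ne'
  have hc1' : (((m+k₁).choose k₁ : ℕ) : ℂ) ≠ 0 :=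
    Nat.cast_ne_zero.mpr (Nat.choose_pos (Nat.le_add_left k₁ m)).ne'
  have hc2' : (((n+k₂).choose k₂ : ℕ) : ℂ) ≠ 0 :=
    Nat.cast_ne_zero.mpr (Nat.choose_pos (Nat.le_add_left k₂ n)).ne'
  field_simp
  linear_combination
    (((s.descFactorial (k₁ + k₂) : ℕ) : ℂ) * ε ^ k₁ * ε ^ k₂ * x ^ k₁ * x ^ m * y ^ k₂ * y ^ n
        * ((k₁.factorial : ℂ))⁻¹ * ((k₂.factorial : ℂ))⁻¹ * ((m.factorial : ℂ))⁻¹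
        * ((n.factorial : ℂ))⁻¹) * mul_inv_cancel₀ (hne (s - (k₁ + k₂)))

/-- reindexed summand -/
noncomputable def G (D B C C' : Mx) (x y ε : ℂ) (s k₁ k₂ : ℕ) (p : ℕ × ℕ) : Mx :=
  ((((p.1.factorial:ℂ)*(p.2.factorial:ℂ))⁻¹ * x^p.1 * y^p.2)
      * (ε^(k₁+k₂) * ((p.1.choose k₁ * (p.2.choose k₂) * s.descFactorial (k₁+k₂) : ℕ):ℂ))) •
    (mPoch D (p.1+p.2-(k₁+k₂)) * mPoch B (p.1+p.2) * (mPoch C p.1)⁻¹ * (mPoch C' p.2)⁻¹)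

lemma hasSum_G (D B C C' : Mx) (x y ε : ℂ)
    (hDB : Commute B D) (hCC' : C * C' = C' * C)
    (hC : ∀ n : ℕ, IsUnit (sh C n)) (hC' : ∀ n : ℕ, IsUnit (sh C' n))
    (hxy : Real.sqrt ‖x‖ + Real.sqrt ‖y‖ < 1)
    (s k₁ k₂ : ℕ) (hk : k₁ + k₂ ≤ s) :
    HasSum (G D B C C' x y ε s k₁ k₂)
      ((((s.factorial : ℂ) / ((k₁.factorial:ℂ) * (k₂.factorial:ℂ) * ((s-k₁-k₂).factorial:ℂ)))
          * (ε*x)^k₁ * (ε*y)^k₂) •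
        (mPoch B (k₁+k₂)
          * (∑' p, term D (sh B (k₁+k₂)) (sh C k₁) (sh C' k₂) x y p)
          * (mPoch C k₁)⁻¹ * (mPoch C' k₂)⁻¹)) := by
  set k := k₁ + k₂ with hkd
  set c : ℂ := ((s.factorial : ℂ) / ((k₁.factorial:ℂ) * (k₂.factorial:ℂ) * ((s-k₁-k₂).factorial:ℂ)))
      * (ε*x)^k₁ * (ε*y)^k₂ with hcd
  have hCs : ∀ j : ℕ, IsUnit (sh (sh C k₁) j) := fun j => by rw [sh_sh]; exact hC _
  have hC's : ∀ j : ℕ, IsUnit (sh (sh C' k₂) j) := fun j => by rw [sh_sh]; exact hC' _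
  have hsum := summable_term D (sh B k) (sh C k₁) (sh C' k₂) x y hCs hC's hxy
  have h2 := (((hsum.hasSum.mul_left (mPoch B k)).mul_right
    ((mPoch C k₁)⁻¹)).mul_right ((mPoch C' k₂)⁻¹)).const_smul c
  have hpoint : ∀ p : ℕ × ℕ,
      G D B C C' x y ε s k₁ k₂ (p.1 + k₁, p.2 + k₂)
      = c • (mPoch B k * term D (sh B k) (sh C k₁) (sh C' k₂) x y p
          * (mPoch C k₁)⁻¹ * (mPoch C' k₂)⁻¹) := by
    rintro ⟨m, n⟩
    show ((((m+k₁).factorial:ℂ)*((n+k₂).factorial:ℂ))⁻¹ * x^(m+k₁) * y^(n+k₂)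
        * (ε^(k₁+k₂) * (((m+k₁).choose k₁ * ((n+k₂).choose k₂) * s.descFactorial (k₁+k₂) : ℕ):ℂ))) •
      (mPoch D ((m+k₁)+(n+k₂)-(k₁+k₂)) * mPoch B ((m+k₁)+(n+k₂))
        * (mPoch C (m+k₁))⁻¹ * (mPoch C' (n+k₂))⁻¹)
      = c • (mPoch B k * ((((m.factorial : ℂ) * (n.factorial : ℂ))⁻¹ * x ^ m * y ^ n) •
          (mPoch D (m + n) * mPoch (sh B k) (m + n)
            * (mPoch (sh C k₁) m)⁻¹ * (mPoch (sh C' k₂) n)⁻¹))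
          * (mPoch C k₁)⁻¹ * (mPoch C' k₂)⁻¹)
    rw [Matrix.mul_smul, Matrix.smul_mul, Matrix.smul_mul, smul_smul]
    have i1 : (m+k₁)+(n+k₂)-(k₁+k₂) = m+n := by omega
    have i2 : (m+k₁)+(n+k₂) = (m+n) + (k₁+k₂) := by omega
    have i3 : m+k₁ = k₁+m := by omega
    have i4 : n+k₂ = k₂+n := by omega
    rw [i1, i2, i3, i4, mat_rearrange D B C C' hDB hCC' hC hC' k₁ k₂ m n (m+n)]
    congr 1
    rw [← i3, ← i4, hcd, ← scalar_eq x y ε s k₁ k₂ m n hk]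
  have hinj : Function.Injective (fun p : ℕ × ℕ => (p.1 + k₁, p.2 + k₂)) := by
    rintro ⟨a, b⟩ ⟨a', b'⟩ h
    simp only [Prod.mk.injEq] at h
    exact Prod.ext (by omega) (by omega)
  have hvanish : ∀ p : ℕ × ℕ, p ∉ Set.range (fun p : ℕ × ℕ => (p.1 + k₁, p.2 + k₂)) →
      G D B C C' x y ε s k₁ k₂ p = 0 := by
    rintro ⟨M, N⟩ hp
    have : M < k₁ ∨ N < k₂ := by
      by_contra h
      push_neg at h
      exact hp ⟨(M - k₁, N - k₂), by
        simp only [Prod.mk.injEq]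
        constructor <;> omega⟩
    unfold G
    rcases this with h | h
    · rw [Nat.choose_eq_zero_of_lt h]; simp
    · rw [Nat.choose_eq_zero_of_lt h]; simp
  have h3 : (fun p : ℕ × ℕ => G D B C C' x y ε s k₁ k₂ (p.1 + k₁, p.2 + k₂))
      = (fun p => c • (mPoch B k * term D (sh B k) (sh C k₁) (sh C' k₂) x y p
          * (mPoch C k₁)⁻¹ * (mPoch C' k₂)⁻¹)) := funext hpoint
  have h4 : HasSum ((G D B C C' x y ε s k₁ k₂) ∘ (fun p : ℕ × ℕ => (p.1 + k₁, p.2 + k₂)))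
      (c • (mPoch B k * (∑' p, term D (sh B k) (sh C k₁) (sh C' k₂) x y p)
          * (mPoch C k₁)⁻¹ * (mPoch C' k₂)⁻¹)) := by
    show HasSum (fun p : ℕ × ℕ => G D B C C' x y ε s k₁ k₂ (p.1 + k₁, p.2 + k₂)) _
    rw [h3]
    exact h2
  exact (hinj.hasSum_iff hvanish).mp h4

lemma sh_def (X : Mx) (k : ℕ) : X + (k : ℂ) • 1 = sh X k := rfl

lemma point_sum (Dk : ℕ → Mx) (E B C C' : Mx) (x y ε : ℂ) (s : ℕ)
    (hkey : ∀ P : ℕ, mPoch E P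
      = ∑ k ∈ range (P+1), (ε^k * ((P.choose k * s.descFactorial k : ℕ):ℂ)) • mPoch (Dk k) (P-k))
    (p : ℕ × ℕ) :
    (∑ k₁ ∈ range (s+1), ∑ k₂ ∈ range (s+1-k₁), G (Dk (k₁+k₂)) B C C' x y ε s k₁ k₂ p)
      = term E B C C' x y p := by
  obtain ⟨M, N⟩ := p
  have step1 : ∀ k₁ k₂ : ℕ, G (Dk (k₁+k₂)) B C C' x y ε s k₁ k₂ (M, N)
      = (((M.factorial:ℂ)*(N.factorial:ℂ))⁻¹ * x^M * y^N) •
          (((M.choose k₁ * (N.choose k₂) * s.descFactorial (k₁+k₂) : ℕ):ℂ) •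
            (ε^(k₁+k₂) • (mPoch (Dk (k₁+k₂)) (M+N-(k₁+k₂)) * mPoch B (M+N)
              * (mPoch C M)⁻¹ * (mPoch C' N)⁻¹))) := by
    intro k₁ k₂
    show ((((M.factorial:ℂ)*(N.factorial:ℂ))⁻¹ * x^M * y^N)
        * (ε^(k₁+k₂) * ((M.choose k₁ * (N.choose k₂) * s.descFactorial (k₁+k₂) : ℕ):ℂ))) •
      (mPoch (Dk (k₁+k₂)) (M+N-(k₁+k₂)) * mPoch B (M+N)
        * (mPoch C M)⁻¹ * (mPoch C' N)⁻¹) = _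
    rw [smul_smul, smul_smul]
    congr 1
    ring
  rw [Finset.sum_congr rfl (fun k₁ _ => Finset.sum_congr rfl (fun k₂ _ => step1 k₁ k₂))]
  rw [Finset.sum_congr rfl (fun k₁ _ => (Finset.smul_sum).symm), ← Finset.smul_sum]
  rw [coeff_sum s M N (fun k => ε^k • (mPoch (Dk k) (M+N-k) * mPoch B (M+N)
    * (mPoch C M)⁻¹ * (mPoch C' N)⁻¹))]
  show _ = (((M.factorial : ℂ) * (N.factorial : ℂ))⁻¹ * x ^ M * y ^ N) •
      (mPoch E (M + N) * mPoch B (M + N) * (mPoch C M)⁻¹ * (mPoch C' N)⁻¹)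
  congr 1
  rw [hkey (M+N), Finset.sum_mul, Finset.sum_mul, Finset.sum_mul]
  apply Finset.sum_congr rfl
  intro k _
  simp only [smul_mul_assoc, smul_smul]
  congr 1
  ring

lemma main_up (A B C C' : Mx) (x y : ℂ)
    (hC : ∀ n : ℕ, IsUnit (sh C n)) (hC' : ∀ n : ℕ, IsUnit (sh C' n))
    (hAB : A * B = B * A) (hCC' : C * C' = C' * C)
    (hxy : Real.sqrt ‖x‖ + Real.sqrt ‖y‖ < 1) (s : ℕ) :
    appellF4 (sh A s) B C C' x y
      = ∑ k₁ ∈ range (s+1), ∑ k₂ ∈ range (s+1-k₁),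
          (((s.factorial : ℂ) / ((k₁.factorial:ℂ)*(k₂.factorial:ℂ)*((s-k₁-k₂).factorial:ℂ)))
            * x^k₁ * y^k₂) •
          (mPoch B (k₁+k₂) * appellF4 (sh A (k₁+k₂)) (sh B (k₁+k₂)) (sh C k₁) (sh C' k₂) x y
            * (mPoch C k₁)⁻¹ * (mPoch C' k₂)⁻¹) := by
  symm
  have hs : ∀ k₁ k₂ : ℕ, k₁ ∈ range (s+1) → k₂ ∈ range (s+1-k₁) → k₁ + k₂ ≤ s := by
    intro k₁ k₂ h1 h2; rw [Finset.mem_range] at h1 h2; omega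
  have hHS : ∀ k₁ k₂ : ℕ, k₁ + k₂ ≤ s →
      HasSum (G (sh A (k₁+k₂)) B C C' x y 1 s k₁ k₂)
        ((((s.factorial : ℂ) / ((k₁.factorial:ℂ)*(k₂.factorial:ℂ)*((s-k₁-k₂).factorial:ℂ)))
            * x^k₁ * y^k₂) •
          (mPoch B (k₁+k₂) * appellF4 (sh A (k₁+k₂)) (sh B (k₁+k₂)) (sh C k₁) (sh C' k₂) x y
            * (mPoch C k₁)⁻¹ * (mPoch C' k₂)⁻¹)) := by
    intro k₁ k₂ hk
    have hBA : Commute B (sh A (k₁+k₂)) :=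
      commute_sh (show Commute B A from hAB.symm) (k₁+k₂)
    have h := hasSum_G (sh A (k₁+k₂)) B C C' x y 1 hBA hCC' hC hC' hxy s k₁ k₂ hk
    simpa only [one_mul, appellF4, term] using h
  have hsml : ∀ k₁ ∈ range (s+1), ∀ k₂ ∈ range (s+1-k₁),
      Summable (G (sh A (k₁+k₂)) B C C' x y 1 s k₁ k₂) :=
    fun k₁ h1 k₂ h2 => (hHS k₁ k₂ (hs _ _ h1 h2)).summable
  calc ∑ k₁ ∈ range (s+1), ∑ k₂ ∈ range (s+1-k₁),
        (((s.factorial : ℂ) / ((k₁.factorial:ℂ)*(k₂.factorial:ℂ)*((s-k₁-k₂).factorial:ℂ)))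
            * x^k₁ * y^k₂) •
          (mPoch B (k₁+k₂) * appellF4 (sh A (k₁+k₂)) (sh B (k₁+k₂)) (sh C k₁) (sh C' k₂) x y
            * (mPoch C k₁)⁻¹ * (mPoch C' k₂)⁻¹)
      = ∑ k₁ ∈ range (s+1), ∑ k₂ ∈ range (s+1-k₁),
          ∑' p, G (sh A (k₁+k₂)) B C C' x y 1 s k₁ k₂ p := by
        apply Finset.sum_congr rfl
        intro k₁ h1
        apply Finset.sum_congr rfl
        intro k₂ h2
        exact ((hHS k₁ k₂ (hs _ _ h1 h2)).tsum_eq).symm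
    _ = ∑ k₁ ∈ range (s+1), ∑' p, ∑ k₂ ∈ range (s+1-k₁),
          G (sh A (k₁+k₂)) B C C' x y 1 s k₁ k₂ p := by
        apply Finset.sum_congr rfl
        intro k₁ h1
        exact (Summable.tsum_finsetSum (fun k₂ h2 => hsml k₁ h1 k₂ h2)).symm
    _ = ∑' p, ∑ k₁ ∈ range (s+1), ∑ k₂ ∈ range (s+1-k₁),
          G (sh A (k₁+k₂)) B C C' x y 1 s k₁ k₂ p := by
        exact (Summable.tsum_finsetSum (fun k₁ h1 => summable_sum (fun k₂ h2 => hsml k₁ h1 k₂ h2))).symm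
    _ = ∑' p, term (sh A s) B C C' x y p := by
        apply tsum_congr
        intro p
        apply point_sum (fun k => sh A k) (sh A s) B C C' x y 1 s _ p
        intro P
        have h := key_up s A P
        simpa only [one_pow, one_mul] using h
    _ = appellF4 (sh A s) B C C' x y := rfl

lemma main_down (A B C C' : Mx) (x y : ℂ)
    (hC : ∀ n : ℕ, IsUnit (sh C n)) (hC' : ∀ n : ℕ, IsUnit (sh C' n))
    (hAB : A * B = B * A) (hCC' : C * C' = C' * C)
    (hxy : Real.sqrt ‖x‖ + Real.sqrt ‖y‖ < 1) (s : ℕ) :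
    appellF4 (A - (s : ℂ) • 1) B C C' x y
      = ∑ k₁ ∈ range (s+1), ∑ k₂ ∈ range (s+1-k₁),
          (((s.factorial : ℂ) / ((k₁.factorial:ℂ)*(k₂.factorial:ℂ)*((s-k₁-k₂).factorial:ℂ)))
            * (-x)^k₁ * (-y)^k₂) •
          (mPoch B (k₁+k₂) * appellF4 A (sh B (k₁+k₂)) (sh C k₁) (sh C' k₂) x y
            * (mPoch C k₁)⁻¹ * (mPoch C' k₂)⁻¹) := by
  symm
  have hs : ∀ k₁ k₂ : ℕ, k₁ ∈ range (s+1) → k₂ ∈ range (s+1-k₁) → k₁ + k₂ ≤ s := by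
    intro k₁ k₂ h1 h2; rw [Finset.mem_range] at h1 h2; omega
  have hHS : ∀ k₁ k₂ : ℕ, k₁ + k₂ ≤ s →
      HasSum (G A B C C' x y (-1) s k₁ k₂)
        ((((s.factorial : ℂ) / ((k₁.factorial:ℂ)*(k₂.factorial:ℂ)*((s-k₁-k₂).factorial:ℂ)))
            * (-x)^k₁ * (-y)^k₂) •
          (mPoch B (k₁+k₂) * appellF4 A (sh B (k₁+k₂)) (sh C k₁) (sh C' k₂) x y
            * (mPoch C k₁)⁻¹ * (mPoch C' k₂)⁻¹)) := by
    intro k₁ k₂ hk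
    have hBA : Commute B A := hAB.symm
    have h := hasSum_G A B C C' x y (-1) hBA hCC' hC hC' hxy s k₁ k₂ hk
    simpa only [neg_one_mul, appellF4, term] using h
  have hsml : ∀ k₁ ∈ range (s+1), ∀ k₂ ∈ range (s+1-k₁),
      Summable (G A B C C' x y (-1) s k₁ k₂) :=
    fun k₁ h1 k₂ h2 => (hHS k₁ k₂ (hs _ _ h1 h2)).summable
  calc ∑ k₁ ∈ range (s+1), ∑ k₂ ∈ range (s+1-k₁),
        (((s.factorial : ℂ) / ((k₁.factorial:ℂ)*(k₂.factorial:ℂ)*((s-k₁-k₂).factorial:ℂ)))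
            * (-x)^k₁ * (-y)^k₂) •
          (mPoch B (k₁+k₂) * appellF4 A (sh B (k₁+k₂)) (sh C k₁) (sh C' k₂) x y
            * (mPoch C k₁)⁻¹ * (mPoch C' k₂)⁻¹)
      = ∑ k₁ ∈ range (s+1), ∑ k₂ ∈ range (s+1-k₁),
          ∑' p, G A B C C' x y (-1) s k₁ k₂ p := by
        apply Finset.sum_congr rfl
        intro k₁ h1
        apply Finset.sum_congr rfl
        intro k₂ h2
        exact ((hHS k₁ k₂ (hs _ _ h1 h2)).tsum_eq).symm
    _ = ∑ k₁ ∈ range (s+1), ∑' p, ∑ k₂ ∈ range (s+1-k₁),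
          G A B C C' x y (-1) s k₁ k₂ p := by
        apply Finset.sum_congr rfl
        intro k₁ h1
        exact (Summable.tsum_finsetSum (fun k₂ h2 => hsml k₁ h1 k₂ h2)).symm
    _ = ∑' p, ∑ k₁ ∈ range (s+1), ∑ k₂ ∈ range (s+1-k₁),
          G A B C C' x y (-1) s k₁ k₂ p := by
        exact (Summable.tsum_finsetSum (fun k₁ h1 => summable_sum (fun k₂ h2 => hsml k₁ h1 k₂ h2))).symm
    _ = ∑' p, term (A - (s : ℂ) • 1) B C C' x y p := by
        apply tsum_congr
        intro p
        exact point_sum (fun _ => A) (A - (s : ℂ) • 1) B C C' x y (-1) s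
          (fun P => key_down s A P) p
    _ = appellF4 (A - (s : ℂ) • 1) B C C' x y := rfl

end AF4

theorem appellF4_recursion_A_multinom {r : ℕ} (A B C C' : Matrix (Fin r) (Fin r) ℂ) (x y : ℂ)
    (hC : ∀ n : ℕ, IsUnit (C + (n : ℂ) • (1 : Matrix (Fin r) (Fin r) ℂ)))
    (hC' : ∀ n : ℕ, IsUnit (C' + (n : ℂ) • (1 : Matrix (Fin r) (Fin r) ℂ)))
    (hAB : A * B = B * A) (hCC' : C * C' = C' * C)
    (hxy : Real.sqrt ‖x‖ + Real.sqrt ‖y‖ < 1) :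
    ((∀ k : ℕ, IsUnit (A + (k : ℂ) • (1 : Matrix (Fin r) (Fin r) ℂ))) →
      ∀ s : ℕ,
        appellF4 (A + (s : ℂ) • 1) B C C' x y =
          ∑ k₁ ∈ Finset.range (s + 1), ∑ k₂ ∈ Finset.range (s + 1 - k₁),
            (((s.factorial : ℂ) /
                ((k₁.factorial : ℂ) * (k₂.factorial : ℂ) * ((s - k₁ - k₂).factorial : ℂ))) *
              x ^ k₁ * y ^ k₂) •
              (mPoch B (k₁ + k₂) *
                appellF4 (A + ((k₁ : ℂ) + (k₂ : ℂ)) • 1) (B + ((k₁ : ℂ) + (k₂ : ℂ)) • 1)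
                  (C + (k₁ : ℂ) • 1) (C' + (k₂ : ℂ) • 1) x y *
                (mPoch C k₁)⁻¹ * (mPoch C' k₂)⁻¹)) ∧
    ((∀ k : ℕ, IsUnit (A + (k : ℂ) • (1 : Matrix (Fin r) (Fin r) ℂ))) →
      ∀ s : ℕ,
        (∀ k : ℕ, 1 ≤ k → k ≤ s → IsUnit (A - (k : ℂ) • (1 : Matrix (Fin r) (Fin r) ℂ))) →
        appellF4 (A - (s : ℂ) • 1) B C C' x y =
          ∑ k₁ ∈ Finset.range (s + 1), ∑ k₂ ∈ Finset.range (s + 1 - k₁),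
            (((s.factorial : ℂ) /
                ((k₁.factorial : ℂ) * (k₂.factorial : ℂ) * ((s - k₁ - k₂).factorial : ℂ))) *
              (-x) ^ k₁ * (-y) ^ k₂) •
              (mPoch B (k₁ + k₂) *
                appellF4 A (B + ((k₁ : ℂ) + (k₂ : ℂ)) • 1)
                  (C + (k₁ : ℂ) • 1) (C' + (k₂ : ℂ) • 1) x y *
                (mPoch C k₁)⁻¹ * (mPoch C' k₂)⁻¹)) := by
  have hCu : ∀ n : ℕ, IsUnit (AF4.sh C n) := hC
  have hC'u : ∀ n : ℕ, IsUnit (AF4.sh C' n) := hC'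
  constructor
  · intro _ s
    simp only [AF4.sh_cast_add, AF4.sh_def]
    exact AF4.main_up A B C C' x y hCu hC'u hAB hCC' hxy s
  · intro _ s _
    simp only [AF4.sh_cast_add, AF4.sh_def]
    exact AF4.main_down A B C C' x y hCu hC'u hAB hCC' hxy s
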